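/- For every n ≥ 1 and every vector ψ : (Fin n → Fin 2) → ℂ, |∑_{f,g} conj(ψ f) · (M_n f g) · (ψ g)| ≤ 2^(n−1) · ∑_f ‖ψ f‖². Hence the quantum maximum of the MABK expression in this realization is 2^{n−1}, attained on unit vectors. -/

import Mathlib

open Matrix BigOperators

noncomputable section

/-- Pauli X matrix. -/
def pauliX : Matrix (Fin 2) (Fin 2) ℂ := !![0, 1; 1, 0]

/-- Pauli Y matrix. -/
def pauliY : Matrix (Fin 2) (Fin 2) ℂ := !![0, -Complex.I; Complex.I, 0]

/-- n-fold tensor (Kronecker) product of a family of 2×2 matrices,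
defined entrywise by `T(A) f g = ∏ j, (A j) (f j) (g j)`. -/
def tensor {n : ℕ} (A : Fin n → Matrix (Fin 2) (Fin 2) ℂ) :
    Matrix (Fin n → Fin 2) (Fin n → Fin 2) ℂ :=
  Matrix.of fun f g => ∏ j, A j (f j) (g j)

/-- The n-partite MABK operator
`M_n = (1/(2i)) (⊗ⱼ (X + iY) − ⊗ⱼ (X − iY))`. -/
def MABK (n : ℕ) : Matrix (Fin n → Fin 2) (Fin n → Fin 2) ℂ :=
  (1 / (2 * Complex.I)) •
    (tensor (fun _ : Fin n => pauliX + Complex.I • pauliY)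
      - tensor (fun _ : Fin n => pauliX - Complex.I • pauliY))

/-- The n-qubit GHZ state `(|0…0⟩ + i|1…1⟩)/√2`. -/
def GHZ (n : ℕ) : (Fin n → Fin 2) → ℂ :=
  fun f =>
    if f = fun _ => 0 then 1 / (Real.sqrt 2 : ℂ)
    else if f = fun _ => 1 then Complex.I / (Real.sqrt 2 : ℂ)
    else 0

/-- The phase-flipped n-qubit GHZ state `(|0…0⟩ − i|1…1⟩)/√2`. -/
def GHZ' (n : ℕ) : (Fin n → Fin 2) → ℂ :=
  fun f =>
    if f = fun _ => 0 then 1 / (Real.sqrt 2 : ℂ)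
    else if f = fun _ => 1 then -Complex.I / (Real.sqrt 2 : ℂ)
    else 0

lemma entryP (a b : Fin 2) : (pauliX + Complex.I • pauliY) a b = if a = 0 ∧ b = 1 then 2 else 0 := by
  fin_cases a <;> fin_cases b <;> simp [pauliX, pauliY, Complex.I_mul_I] <;> norm_num

lemma entryQ (a b : Fin 2) : (pauliX - Complex.I • pauliY) a b = if a = 1 ∧ b = 0 then 2 else 0 := by
  fin_cases a <;> fin_cases b <;> simp [pauliX, pauliY, Complex.I_mul_I] <;> norm_num

lemma tensorP {n : ℕ} (f g : Fin n → Fin 2) :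
    tensor (fun _ : Fin n => pauliX + Complex.I • pauliY) f g
      = if (f = fun _ => 0) ∧ (g = fun _ => 1) then 2 ^ n else 0 := by
  show (∏ j, (pauliX + Complex.I • pauliY) (f j) (g j)) = _
  simp only [entryP]
  by_cases h : (f = fun _ => 0) ∧ (g = fun _ => 1)
  · obtain ⟨h1, h2⟩ := h
    subst h1; subst h2
    simp
  · rw [if_neg h]
    rw [not_and_or] at h
    rcases h with h | h <;>
    · obtain ⟨j, hj⟩ := Function.ne_iff.mp h
      exact Finset.prod_eq_zero (Finset.mem_univ j) (by simp [hj])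

lemma tensorQ {n : ℕ} (f g : Fin n → Fin 2) :
    tensor (fun _ : Fin n => pauliX - Complex.I • pauliY) f g
      = if (f = fun _ => 1) ∧ (g = fun _ => 0) then 2 ^ n else 0 := by
  show (∏ j, (pauliX - Complex.I • pauliY) (f j) (g j)) = _
  simp only [entryQ]
  by_cases h : (f = fun _ => 1) ∧ (g = fun _ => 0)
  · obtain ⟨h1, h2⟩ := h
    subst h1; subst h2
    simp
  · rw [if_neg h]
    rw [not_and_or] at h
    rcases h with h | h <;>
    · obtain ⟨j, hj⟩ := Function.ne_iff.mp h
      exact Finset.prod_eq_zero (Finset.mem_univ j) (by simp [hj])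

/-- The quantum maximum of the MABK expression in this realization is 2^(n−1):
for every vector ψ, |⟨ψ|M_n|ψ⟩| ≤ 2^(n−1) ⟨ψ|ψ⟩. -/
theorem mabk_quantum_bound (n : ℕ) (hn : 1 ≤ n) (ψ : (Fin n → Fin 2) → ℂ) :
    ‖∑ f, ∑ g, (starRingEnd ℂ) (ψ f) * MABK n f g * ψ g‖
      ≤ 2 ^ (n - 1) * ∑ f, ‖ψ f‖ ^ 2 := by
  have hne : (fun _ : Fin n => (0 : Fin 2)) ≠ (fun _ => 1) := by
    intro h
    have := congrFun h ⟨0, hn⟩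
    simp at this
  set c : ℂ := (1 / (2 * Complex.I)) * 2 ^ n with hc
  have hM : ∀ f g, MABK n f g
      = (if (f = fun _ => 0) ∧ (g = fun _ => 1) then c else 0)
        - (if (f = fun _ => 1) ∧ (g = fun _ => 0) then c else 0) := by
    intro f g
    show (1 / (2 * Complex.I)) * (tensor _ f g - tensor _ f g) = _
    rw [tensorP, tensorQ]
    split_ifs with h1 h2 h2 <;> [skip; skip; skip; skip] <;>
      first
        | (exact absurd (h1.1.symm.trans h2.1) hne)
        | (rw [hc]; ring)
        | ring
  set a := ψ (fun _ => 0) with ha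
  set b := ψ (fun _ => 1) with hb
  have key : ∀ (x y : Fin n → Fin 2) (v : ℂ),
      (∑ f, ∑ g, (if f = x ∧ g = y then v else 0)) = v := by
    intro x y v
    simp [ite_and, Finset.sum_ite_eq]
  have hsum : (∑ f, ∑ g, (starRingEnd ℂ) (ψ f) * MABK n f g * ψ g)
      = c * ((starRingEnd ℂ) a * b) - c * ((starRingEnd ℂ) b * a) := by
    have hpt : ∀ f g, (starRingEnd ℂ) (ψ f) * MABK n f g * ψ g
        = (if (f = fun _ => 0) ∧ (g = fun _ => 1) then c * ((starRingEnd ℂ) a * b) else 0)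
          - (if (f = fun _ => 1) ∧ (g = fun _ => 0) then c * ((starRingEnd ℂ) b * a) else 0) := by
      intro f g
      rw [hM]
      by_cases h1 : (f = fun _ => 0) ∧ (g = fun _ => 1) <;>
        by_cases h2 : (f = fun _ => 1) ∧ (g = fun _ => 0)
      · exact absurd (h1.1.symm.trans h2.1) hne
      · obtain ⟨e1, e2⟩ := h1; subst e1; subst e2; simp [h2, ha, hb]; ring
      · obtain ⟨e1, e2⟩ := h2; subst e1; subst e2; simp [h1, ha, hb]; ring
      · simp [h1, h2]
    simp only [hpt, Finset.sum_sub_distrib, key]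
  rw [hsum]
  have habs_c : ‖c‖ = 2 ^ (n - 1) := by
    rw [hc]
    simp [Complex.norm_I]
    rw [show (2:ℝ)^n = 2^(n-1)*2 by rw [← pow_succ]; congr 1; omega]
    field_simp
  set z := (starRingEnd ℂ) a * b with hz
  have hzc : (starRingEnd ℂ) b * a = (starRingEnd ℂ) z := by
    simp [hz, mul_comm]
  rw [hzc, ← mul_sub, norm_mul, habs_c]
  have h1 : ‖z - (starRingEnd ℂ) z‖
      ≤ ‖z‖ + ‖(starRingEnd ℂ) z‖ :=
    norm_sub_le _ _
  have h1' : ‖z - (starRingEnd ℂ) z‖ ≤ 2 * ‖z‖ := by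
    rw [Complex.norm_conj] at h1; linarith
  have h2 : ‖z‖ = ‖a‖ * ‖b‖ := by
    rw [hz, norm_mul]
    simp [Complex.norm_conj]
  have h3 : 2 * ‖z‖ ≤ ‖a‖ ^ 2 + ‖b‖ ^ 2 := by
    rw [h2, ← mul_assoc]
    exact two_mul_le_add_sq ‖a‖ ‖b‖
  have h4 : ‖a‖ ^ 2 + ‖b‖ ^ 2 ≤ ∑ f, ‖ψ f‖ ^ 2 := by
    have := Finset.sum_le_sum_of_subset_of_nonneg
      (f := fun i => ‖ψ i‖ ^ 2)
      (Finset.subset_univ ({(fun _ => 0), (fun _ => 1)} : Finset (Fin n → Fin 2)))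
      (fun i _ _ => by positivity)
    rwa [Finset.sum_pair hne] at this
  calc (2:ℝ) ^ (n-1) * ‖z - (starRingEnd ℂ) z‖
      ≤ 2 ^ (n-1) * (‖a‖^2 + ‖b‖^2) :=
        mul_le_mul_of_nonneg_left (h1'.trans h3) (by positivity)
    _ ≤ 2 ^ (n-1) * ∑ f, ‖ψ f‖^2 :=
        mul_le_mul_of_nonneg_left h4 (by positivity)
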